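/- In the setting of the previous Green-function construction, with the |·|-weight e^{-β|n|} instead of e^{-β n} (β ∈ (−α, α)): for any sequence f with sup_k K(k)e^{-β|k|}|f(k)| < ∞, the sequence x(n) = Σ_{k∈ℤ} G(n,k)f(k) converges absolutely, solves x(n+1) = A(n)x(n) + f(n+1), and satisfies sup_n e^{-β|n|}|x(n)| ≤ γ̃ · sup_k K(k)e^{-β|k|}|f(k)|, where γ̃ = (1+e^{-(α-β)})/(1-e^{-(α-β)}) if β ≥ 0 and γ̃ = (1+e^{-(α+β)})/(1-e^{-(α+β)}) if β < 0. -/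

import Mathlib

lemma aux_hasSum_exp_abs (δ : ℝ) (hδ : 0 < δ) (n : ℤ) :
    HasSum (fun k : ℤ => Real.exp (-δ * |(n : ℝ) - (k : ℝ)|))
      ((1 + Real.exp (-δ)) / (1 - Real.exp (-δ))) := by
  set r := Real.exp (-δ) with hr
  have hr0 : 0 < r := Real.exp_pos _
  have hr1 : r < 1 := Real.exp_lt_one_iff.mpr (by linarith)
  have hgeo : HasSum (fun m : ℕ => r * r ^ m) (r * (1 - r)⁻¹) :=
    (hasSum_geometric_of_lt_one hr0.le hr1).mul_left r
  have hbase : HasSum (fun j : ℤ => Real.exp (-δ * |(j : ℝ)|))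
      (r * (1 - r)⁻¹ + Real.exp (-δ * |((0 : ℤ) : ℝ)|) + r * (1 - r)⁻¹) := by
    apply HasSum.of_add_one_of_neg_add_one
    · convert hgeo using 2 with m
      have : |(((m : ℤ) + 1 : ℤ) : ℝ)| = (m : ℝ) + 1 := by
        push_cast; rw [abs_of_nonneg]; positivity
      rw [this, hr, ← Real.exp_nat_mul, ← Real.exp_add]
      ring_nf
    · convert hgeo using 2 with m
      have : |((-(((m : ℤ)) + 1) : ℤ) : ℝ)| = (m : ℝ) + 1 := by
        push_cast; rw [abs_neg, abs_of_nonneg]; positivity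
      rw [this, hr, ← Real.exp_nat_mul, ← Real.exp_add]
      ring_nf
  have h0 : Real.exp (-δ * |((0 : ℤ) : ℝ)|) = 1 := by simp
  rw [h0] at hbase
  have hsum : r * (1 - r)⁻¹ + 1 + r * (1 - r)⁻¹ = (1 + r) / (1 - r) := by
    have : 1 - r ≠ 0 := by linarith
    field_simp
    ring
  rw [hsum] at hbase
  have := (Equiv.hasSum_iff (Equiv.subLeft n) (f := fun j : ℤ => Real.exp (-δ * |(j : ℝ)|))
      (a := (1 + r) / (1 - r))).mpr hbase
  convert this using 2 with k
  simp [Equiv.subLeft]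

theorem stmt_5 {X : Type*} [NormedAddCommGroup X] [NormedSpace ℝ X] [CompleteSpace X]
    (A : ℤ → X →L[ℝ] X) (U : ℤ → ℤ → X →L[ℝ] X) (P : ℤ → X →L[ℝ] X)
    (G : ℤ → ℤ → X →L[ℝ] X)
    (α β : ℝ) (K : ℤ → ℝ)
    (hα : 0 < α) (hβ : |β| < α) (hK : ∀ n, 0 < K n)
    (hU0 : ∀ m : ℤ, U m m = 1)
    (hUstep : ∀ n m : ℤ, m ≤ n → U (n + 1) m = (A n).comp (U n m))
    (hproj : ∀ n : ℤ, (P n).comp (P n) = P n)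
    (hcomm : ∀ n : ℤ, (P (n + 1)).comp (A n) = (A n).comp (P n))
    (hs : ∀ n m : ℤ, m ≤ n →
      ‖(U n m).comp (P m)‖ ≤ K m * Real.exp (-α * ((n : ℝ) - (m : ℝ))))
    (hu : ∀ n m : ℤ, n ≤ m →
      ‖(U n m).comp (1 - P m)‖ ≤ K m * Real.exp (-α * ((m : ℝ) - (n : ℝ))))
    (hinv : ∀ n m : ℤ, n ≤ m → (U n m).comp ((1 - P m).comp (U m n)) = 1 - P n)
    (hback : ∀ n m : ℤ, n < m →
      (A n).comp ((U n m).comp (1 - P m)) = (U (n + 1) m).comp (1 - P m))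
    (hGs : ∀ n m : ℤ, m ≤ n → G n m = (U n m).comp (P m))
    (hGu : ∀ n m : ℤ, n < m → G n m = -((U n m).comp (1 - P m)))
    (f : ℤ → X) (M : ℝ)
    (hf : ∀ k : ℤ, K k * Real.exp (-β * |(k : ℝ)|) * ‖f k‖ ≤ M) :
    (∀ n : ℤ, Summable fun k : ℤ => ‖G n k (f k)‖) ∧
    (∀ n : ℤ, (∑' k : ℤ, G (n + 1) k (f k)) = A n (∑' k : ℤ, G n k (f k)) + f (n + 1)) ∧
    (∀ n : ℤ, Real.exp (-β * |(n : ℝ)|) * ‖∑' k : ℤ, G n k (f k)‖ ≤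
      (if 0 ≤ β then (1 + Real.exp (-(α - β))) / (1 - Real.exp (-(α - β)))
        else (1 + Real.exp (-(α + β))) / (1 - Real.exp (-(α + β)))) * M) := by
  have hM0 : 0 ≤ M :=
    le_trans (mul_nonneg (mul_nonneg (hK 0).le (Real.exp_pos _).le) (norm_nonneg _)) (hf 0)
  set δ : ℝ := α - |β| with hδdef
  have hδ : 0 < δ := by
    have := hβ; simp only [hδdef]; linarith
  -- norm bound on G
  have hGnorm : ∀ n k : ℤ, ‖G n k‖ ≤ K k * Real.exp (-α * |(n : ℝ) - (k : ℝ)|) := by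
    intro n k
    rcases le_or_gt k n with h | h
    · have hc : (k : ℝ) ≤ (n : ℝ) := by exact_mod_cast h
      rw [hGs n k h, abs_of_nonneg (by linarith : (0:ℝ) ≤ (n:ℝ) - (k:ℝ))]
      exact hs n k h
    · have hc : (n : ℝ) ≤ (k : ℝ) := by exact_mod_cast h.le
      rw [hGu n k h, norm_neg, abs_of_nonpos (by linarith : (n:ℝ) - (k:ℝ) ≤ 0), neg_sub]
      exact hu n k h.le
  -- key pointwise bound
  have hkey : ∀ n k : ℤ, Real.exp (-β * |(n : ℝ)|) * ‖G n k (f k)‖ ≤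
      M * Real.exp (-δ * |(n : ℝ) - (k : ℝ)|) := by
    intro n k
    set a := |(n : ℝ)| with ha
    set b := |(k : ℝ)| with hb
    set t := |(n : ℝ) - (k : ℝ)| with ht
    have ht0 : 0 ≤ t := abs_nonneg _
    have h1 : ‖G n k (f k)‖ ≤ Real.exp (-α * t) * (K k * ‖f k‖) := by
      have h2 := (G n k).le_opNorm (f k)
      have h3 := hGnorm n k
      nlinarith [norm_nonneg (f k), norm_nonneg (G n k), Real.exp_pos (-α * t), (hK k).le]
    have hfk : K k * ‖f k‖ ≤ M * Real.exp (β * b) := by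
      have h4 := mul_le_mul_of_nonneg_left (hf k) (Real.exp_pos (β * b)).le
      calc K k * ‖f k‖
          = Real.exp (β * b) * (K k * Real.exp (-β * b) * ‖f k‖) := by
            rw [show Real.exp (β * b) * (K k * Real.exp (-β * b) * ‖f k‖)
                = (Real.exp (β * b) * Real.exp (-β * b)) * (K k * ‖f k‖) from by ring,
              ← Real.exp_add]
            simp
        _ ≤ Real.exp (β * b) * M := h4
        _ = M * Real.exp (β * b) := mul_comm _ _
    have habs : β * b - β * a ≤ |β| * t := by
      calc β * b - β * a = β * (b - a) := by ring
        _ ≤ |β * (b - a)| := le_abs_self _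
        _ = |β| * |b - a| := abs_mul _ _
        _ ≤ |β| * |(k : ℝ) - (n : ℝ)| :=
            mul_le_mul_of_nonneg_left (abs_abs_sub_abs_le_abs_sub _ _) (abs_nonneg β)
        _ = |β| * t := by rw [abs_sub_comm]
    calc Real.exp (-β * a) * ‖G n k (f k)‖
        ≤ Real.exp (-β * a) * (Real.exp (-α * t) * (K k * ‖f k‖)) :=
          mul_le_mul_of_nonneg_left h1 (Real.exp_pos _).le
      _ ≤ Real.exp (-β * a) * (Real.exp (-α * t) * (M * Real.exp (β * b))) := by
          have := mul_le_mul_of_nonneg_left hfk (Real.exp_pos (-α * t)).le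
          exact mul_le_mul_of_nonneg_left this (Real.exp_pos _).le
      _ = M * (Real.exp (-β * a) * Real.exp (-α * t) * Real.exp (β * b)) := by ring
      _ = M * Real.exp (-β * a + -α * t + β * b) := by
          rw [Real.exp_add, Real.exp_add]
      _ ≤ M * Real.exp (-δ * t) := by
          apply mul_le_mul_of_nonneg_left _ hM0
          apply Real.exp_le_exp.mpr
          have hδt : -δ * t = -α * t + |β| * t := by rw [hδdef]; ring
          linarith
  have hsumexp : ∀ n : ℤ, Summable fun k : ℤ => Real.exp (-δ * |(n : ℝ) - (k : ℝ)|) :=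
    fun n => (aux_hasSum_exp_abs δ hδ n).summable
  have part1 : ∀ n : ℤ, Summable fun k : ℤ => ‖G n k (f k)‖ := by
    intro n
    apply Summable.of_nonneg_of_le (fun k => norm_nonneg _) (fun k => ?_)
      ((hsumexp n).mul_left (Real.exp (β * |(n : ℝ)|) * M))
    calc ‖G n k (f k)‖
        = Real.exp (β * |(n : ℝ)|) * (Real.exp (-β * |(n : ℝ)|) * ‖G n k (f k)‖) := by
          rw [← mul_assoc, ← Real.exp_add]; simp
      _ ≤ Real.exp (β * |(n : ℝ)|) * (M * Real.exp (-δ * |(n : ℝ) - (k : ℝ)|)) :=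
          mul_le_mul_of_nonneg_left (hkey n k) (Real.exp_pos _).le
      _ = Real.exp (β * |(n : ℝ)|) * M * Real.exp (-δ * |(n : ℝ) - (k : ℝ)|) := by ring
  refine ⟨part1, ?_, ?_⟩
  · -- the equation
    intro n
    have S1 : Summable fun k : ℤ => G n k (f k) := (part1 n).of_norm
    have hpt : ∀ k : ℤ, G (n + 1) k (f k)
        = A n (G n k (f k)) + (if k = n + 1 then f (n + 1) else 0) := by
      intro k
      rcases lt_trichotomy k (n + 1) with hk | hk | hk
      · have hk' : k ≤ n := by omega
        rw [if_neg (by omega), add_zero, hGs (n + 1) k (by omega), hGs n k hk',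
          hUstep n k hk']
        simp [ContinuousLinearMap.coe_comp', Function.comp_apply]
      · subst hk
        rw [if_pos rfl, hGs (n + 1) (n + 1) le_rfl, hU0, hGu n (n + 1) (by omega)]
        have hb := congrArg (fun T : X →L[ℝ] X => T (f (n + 1))) (hback n (n + 1) (by omega))
        rw [hU0] at hb
        simp only [ContinuousLinearMap.coe_comp', Function.comp_apply,
          ContinuousLinearMap.one_apply, ContinuousLinearMap.sub_apply,
          ContinuousLinearMap.neg_apply, map_neg] at hb ⊢
        rw [hb]
        abel
      · rw [if_neg (by omega), add_zero, hGu (n + 1) k hk, hGu n k (by omega)]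
        have hb := congrArg (fun T : X →L[ℝ] X => T (f k)) (hback n k (by omega))
        simp only [ContinuousLinearMap.coe_comp', Function.comp_apply] at hb
        simp only [ContinuousLinearMap.neg_apply, map_neg, neg_inj]
        exact hb.symm
    have S2 : Summable fun k : ℤ => A n (G n k (f k)) := S1.mapL (A n)
    have S3 : Summable fun k : ℤ => (if k = n + 1 then f (n + 1) else 0 : X) :=
      (hasSum_ite_eq (n + 1) (f (n + 1))).summable
    calc (∑' k : ℤ, G (n + 1) k (f k))
        = ∑' k : ℤ, (A n (G n k (f k)) + (if k = n + 1 then f (n + 1) else 0)) :=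
          tsum_congr hpt
      _ = (∑' k : ℤ, A n (G n k (f k))) + ∑' k : ℤ, (if k = n + 1 then f (n + 1) else 0 : X) :=
          Summable.tsum_add S2 S3
      _ = A n (∑' k : ℤ, G n k (f k)) + f (n + 1) := by
          rw [(S1.hasSum.mapL (A n)).tsum_eq, tsum_ite_eq]
  · -- the bound
    intro n
    have hγ : (if 0 ≤ β then (1 + Real.exp (-(α - β))) / (1 - Real.exp (-(α - β)))
        else (1 + Real.exp (-(α + β))) / (1 - Real.exp (-(α + β))))
        = (1 + Real.exp (-δ)) / (1 - Real.exp (-δ)) := by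
      rcases le_or_gt 0 β with h | h
      · rw [if_pos h, hδdef, abs_of_nonneg h]
      · rw [if_neg (not_le.mpr h), hδdef, abs_of_neg h]
        norm_num
    rw [hγ]
    calc Real.exp (-β * |(n : ℝ)|) * ‖∑' k : ℤ, G n k (f k)‖
        ≤ Real.exp (-β * |(n : ℝ)|) * ∑' k : ℤ, ‖G n k (f k)‖ :=
          mul_le_mul_of_nonneg_left (norm_tsum_le_tsum_norm (part1 n)) (Real.exp_pos _).le
      _ = ∑' k : ℤ, Real.exp (-β * |(n : ℝ)|) * ‖G n k (f k)‖ := tsum_mul_left.symm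
      _ ≤ ∑' k : ℤ, M * Real.exp (-δ * |(n : ℝ) - (k : ℝ)|) :=
          Summable.tsum_le_tsum (fun k => hkey n k) ((part1 n).mul_left _) ((hsumexp n).mul_left M)
      _ = M * ((1 + Real.exp (-δ)) / (1 - Real.exp (-δ))) := by
          rw [tsum_mul_left, (aux_hasSum_exp_abs δ hδ n).tsum_eq]
      _ = (1 + Real.exp (-δ)) / (1 - Real.exp (-δ)) * M := mul_comm _ _
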